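/- Let A be a groupoid. Let N_A denote the set of pairs (F, σ) where F is a strict automorphism of A and σ : 𝟭_A ⟹ F is a natural transformation. Then N_A is a group under the operation (G, γ) ⊛ (F, σ) := (F ⋙ G, x ↦ σ(x)·γ(F(x))) (whose second component is a natural transformation 𝟭_A ⟹ F ⋙ G with component at x the composite of σ(x) : x ⟶ F(x) and γ(F(x)) : F(x) ⟶ G(F(x)))), with identity element (𝟭_A, the identity natural transformation) and with the inverse of (F, σ) given by (F⁻¹, x ↦ σ(F⁻¹(x))⁻¹). -/

import Mathlib

/-!
Statement 0: For a groupoid `A`, the set `N_A` of pairs `(F, σ)` — `F` a strict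
automorphism of `A` and `σ : 𝟭_A ⟹ F` a natural transformation — is a group under
`(G, γ) ⊛ (F, σ) := (F ⋙ G, x ↦ σ(x)·γ(F(x)))`, with identity `(𝟭_A, id)` and with
the inverse of `(F, σ)` given by `(F⁻¹, x ↦ σ(F⁻¹(x))⁻¹)`.
(Composition of arrows is written left-to-right, i.e. `α ≫ β`.)
-/

open CategoryTheory

universe v u

/-- A strict automorphism of a groupoid: a functor with a strict inverse. -/
structure GrpdAut (A : Type u) [Groupoid A] where
  F : A ⥤ A
  inv : A ⥤ A
  comp_inv : F ⋙ inv = 𝟭 A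
  inv_comp : inv ⋙ F = 𝟭 A

variable {A : Type u} [Groupoid A]

/-- The identity strict automorphism. -/
def GrpdAut.one (A : Type u) [Groupoid A] : GrpdAut A := ⟨𝟭 A, 𝟭 A, rfl, rfl⟩

/-- Composition of strict automorphisms, written left-to-right: first `f`, then `g`. -/
def GrpdAut.comp (f g : GrpdAut A) : GrpdAut A where
  F := f.F ⋙ g.F
  inv := g.inv ⋙ f.inv
  comp_inv := by
    rw [Functor.assoc, ← Functor.assoc g.F, g.comp_inv, Functor.id_comp, f.comp_inv]
  inv_comp := by
    rw [Functor.assoc, ← Functor.assoc f.inv, f.inv_comp, Functor.id_comp, g.inv_comp]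

/-- The inverse strict automorphism `F⁻¹`. -/
def GrpdAut.symm (f : GrpdAut A) : GrpdAut A := ⟨f.inv, f.F, f.inv_comp, f.comp_inv⟩

theorem GrpdAut.F_inv_obj (f : GrpdAut A) (a : A) : f.F.obj (f.inv.obj a) = a :=
  Functor.congr_obj f.inv_comp a

theorem GrpdAut.inv_F_obj (f : GrpdAut A) (a : A) : f.inv.obj (f.F.obj a) = a :=
  Functor.congr_obj f.comp_inv a

/-- An element of `N_A`: a strict automorphism `F` of `A` together with a natural
transformation `σ : 𝟭_A ⟹ F`. -/
structure NElem (A : Type u) [Groupoid A] where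
  F : GrpdAut A
  σ : 𝟭 A ⟶ F.F

/-- The identity element `(𝟭_A, identity natural transformation)` of `N_A`. -/
def NElem.one (A : Type u) [Groupoid A] : NElem A := ⟨GrpdAut.one A, 𝟙 (𝟭 A)⟩

/-- The product `(G, γ) ⊛ (F, σ) := (F ⋙ G, x ↦ σ(x)·γ(F(x)))`:
`NElem.mul g f` is `g ⊛ f`. -/
def NElem.mul (g f : NElem A) : NElem A where
  F := f.F.comp g.F
  σ :=
    { app := fun x => f.σ.app x ≫ g.σ.app (f.F.F.obj x)
      naturality := by
        intro x y h
        have h1 := f.σ.naturality h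
        have h2 := g.σ.naturality (f.F.F.map h)
        simp only [Functor.id_map] at h1 h2
        change h ≫ f.σ.app y ≫ g.σ.app (f.F.F.obj y) =
          (f.σ.app x ≫ g.σ.app (f.F.F.obj x)) ≫ g.F.F.map (f.F.F.map h)
        rw [← Category.assoc, h1, Category.assoc, h2, Category.assoc] }

/-- The inverse `(F, σ)⁻¹ := (F⁻¹, x ↦ σ(F⁻¹(x))⁻¹)`; the strict identification
`F(F⁻¹(x)) = x` is implemented by `eqToHom`. -/
def NElem.inv (f : NElem A) : NElem A where
  F := f.F.symm
  σ :=
    { app := fun x =>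
        eqToHom (f.F.F_inv_obj x).symm ≫ Groupoid.inv (f.σ.app (f.F.inv.obj x))
      naturality := by
        intro x y h
        have h1 := f.σ.naturality (f.F.inv.map h)
        simp only [Functor.id_map] at h1
        have h2 := Functor.congr_hom f.F.inv_comp h
        simp only [Functor.comp_map, Functor.id_map] at h2
        simp only [Functor.id_map, GrpdAut.symm, Groupoid.inv_eq_inv]
        rw [← cancel_mono (f.σ.app (f.F.inv.obj y))]
        simp only [Category.assoc, IsIso.inv_hom_id, Category.comp_id]
        rw [h1, h2]
        simp }


theorem NElem.ext' {f g : NElem A} (h1 : f.F.F = g.F.F) (h2 : f.F.inv = g.F.inv)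
    (h3 : ∀ x, f.σ.app x = g.σ.app x ≫ eqToHom (congrArg (fun (H : A ⥤ A) => H.obj x) h1).symm) :
    f = g := by
  obtain ⟨⟨F1, I1, c1, i1⟩, σ1⟩ := f
  obtain ⟨⟨F2, I2, c2, i2⟩, σ2⟩ := g
  dsimp at h1 h2 h3
  subst h1; subst h2
  congr 1
  apply NatTrans.ext
  funext x
  simpa using h3 x

theorem nElem_group_aux : True := trivial

/-- `N_A` is a group under `⊛`, with identity `(𝟭_A, id)` and
inverse `(F, σ)⁻¹ = (F⁻¹, x ↦ σ(F⁻¹(x))⁻¹)`. -/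
theorem nElem_group (A : Type u) [Groupoid A] :
    (∀ f g h : NElem A, NElem.mul h (NElem.mul g f) = NElem.mul (NElem.mul h g) f) ∧
    (∀ f : NElem A, NElem.mul f (NElem.one A) = f) ∧
    (∀ f : NElem A, NElem.mul (NElem.one A) f = f) ∧
    (∀ f : NElem A, NElem.mul (NElem.inv f) f = NElem.one A) ∧
    (∀ f : NElem A, NElem.mul f (NElem.inv f) = NElem.one A) := by

  refine ⟨?_, ?_, ?_, ?_, ?_⟩
  · intro f g h
    refine NElem.ext' rfl rfl fun x => ?_
    simp [NElem.mul, GrpdAut.comp]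
  · intro f
    refine NElem.ext' rfl rfl fun x => ?_
    simp [NElem.mul, NElem.one, GrpdAut.one]
    exact (Category.id_comp _).trans (Category.comp_id _).symm
  · intro f
    refine NElem.ext' rfl rfl fun x => ?_
    simp [NElem.mul, NElem.one, GrpdAut.one]
    exact (Category.comp_id _).trans (Category.comp_id _).symm
  · intro f
    refine NElem.ext' f.F.comp_inv f.F.comp_inv fun x => ?_
    have h : f.F.inv.obj (f.F.F.obj x) = x := f.F.inv_F_obj x
    have key : f.σ.app (f.F.inv.obj (f.F.F.obj x))
        = eqToHom h ≫ f.σ.app x ≫ eqToHom (congrArg f.F.F.obj h).symm := by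
      have n := f.σ.naturality (eqToHom h)
      simp only [Functor.id_map, eqToHom_map] at n
      rw [← Category.assoc, n, Category.assoc, eqToHom_trans, eqToHom_refl, Category.comp_id]
    simp [NElem.mul, NElem.inv, NElem.one, GrpdAut.one, GrpdAut.symm, GrpdAut.comp, key,
      Groupoid.inv_eq_inv]
  · intro f
    refine NElem.ext' f.F.inv_comp f.F.inv_comp fun x => ?_
    simp [NElem.mul, NElem.inv, NElem.one, GrpdAut.one, GrpdAut.symm, GrpdAut.comp,
      Groupoid.inv_eq_inv]
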